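/- Let Λ ⊂ Z^d be finite and W ⊂ Λ; write H_W(σ) = Σ_{{x,y}∈W*} J_{xy} σ_x σ_y, H_{Λ∖W}(σ) = Σ_{{x,y}∈(Λ∖W)*} J_{xy} σ_x σ_y, and V_{∂W}(σ) = Σ_{{x,y}∈∂W} J_{xy} σ_x σ_y, where ∂W is the set of edges of Λ* with exactly one endpoint in W. Let ν be the product of standard Gaussians over Λ*. For β_W ≥ 0 and β ≥ 0 define f_{Λ,W}(β_W) = (1/|W|) ∫ν(dJ) log[ ( Σ_{σ∈{−1,+1}^Λ} e^{β_W H_W(σ) + β H_{Λ∖W}(σ) + β V_{∂W}(σ)} ) / ( Σ_{τ∈{−1,+1}^{Λ∖W}} e^{β H_{Λ∖W}(τ)} ) ] and f_W(β_W) = (1/|W|) ∫ν(dJ) log Σ_{σ∈{−1,+1}^W} e^{β_W H_W(σ)}. Then 0 ≤ f_{Λ,W}(β_W) − f_W(β_W) ≤ (β²/2) · |∂W|/|W|. -/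

import Mathlib

open MeasureTheory ProbabilityTheory Filter
open scoped ENNReal

noncomputable section

/-- Sites of `ℤ^d`. -/
abbrev Site (d : ℕ) := Fin d → ℤ
/-- Spin configurations on `ℤ^d`: `S = {−1,+1}^{ℤ^d}`, with `Bool` coding spins. -/
abbrev Config (d : ℕ) := Site d → Bool
/-- Nearest-neighbour edges of `ℤ^d`, parametrized by (site, direction). -/
abbrev Edge (d : ℕ) := Site d × Fin d

/-- The spin value `±1` of a Boolean. -/
def spin (b : Bool) : ℝ := if b then 1 else -1

/-- Second endpoint of an edge. -/
def ep2 {d : ℕ} (e : Edge d) : Site d := fun j => e.1 j + if j = e.2 then 1 else 0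

/-- The box `Λ_L = {−L,…,L}^d`. -/
def box (d L : ℕ) : Finset (Site d) := Fintype.piFinset fun _ => Finset.Icc (-(L : ℤ)) (L : ℤ)

/-- `W*`: the edges with both endpoints in `W`. -/
def edgesIn {d : ℕ} (W : Finset (Site d)) : Finset (Edge d) :=
  (W ×ˢ (Finset.univ : Finset (Fin d))).filter fun e => ep2 e ∈ W

/-- `∑_{e ∈ E} J_e σ_x σ_y`, the (negative of the) Hamiltonian restricted to edge set `E`. -/
def energy {d : ℕ} (E : Finset (Edge d)) (J : Edge d → ℝ) (σ : Config d) : ℝ :=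
  ∑ e ∈ E, J e * spin (σ e.1) * spin (σ (ep2 e))

/-- Extend a configuration on `Λ` to `ℤ^d` by `+1` outside `Λ`. -/
def extendConfig {d : ℕ} (Λ : Finset (Site d)) (σ : ↥Λ → Bool) : Config d :=
  fun x => if h : x ∈ Λ then σ ⟨x, h⟩ else true

/-- Finite-volume Gibbs-type measure on `S` for a weight `w`, supported on configurations
equal to `+1` off `Λ`. -/
def finGibbs {d : ℕ} (Λ : Finset (Site d)) (w : Config d → ℝ) : Measure (Config d) :=
  (∑ σ : ↥Λ → Bool, ENNReal.ofReal (w (extendConfig Λ σ)))⁻¹ •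
    ∑ σ : ↥Λ → Bool, ENNReal.ofReal (w (extendConfig Λ σ)) • Measure.dirac (extendConfig Λ σ)

/-- The EA Gibbs measure `G_{Λ,β,J}` (free boundary conditions), regarded as a measure on `S`. -/
def eaGibbs {d : ℕ} (Λ : Finset (Site d)) (β : ℝ) (J : Edge d → ℝ) : Measure (Config d) :=
  finGibbs Λ fun σ => Real.exp (β * energy (edgesIn Λ) J σ)

/-- `ν` is the product over the index set of standard Gaussians: all finite-dimensional
marginals are standard Gaussian product measures. -/
def stdGaussianProduct {ι : Type} (ν : Measure (ι → ℝ)) : Prop :=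
  IsProbabilityMeasure ν ∧
    ∀ A : Finset ι, ν.map (fun J (e : ↥A) => J ↑e) = Measure.pi fun _ : ↥A => gaussianReal 0 1

/-- The limit edge overlap `R^W` in the window `W`. -/
def overlapW {d : ℕ} (W : Finset (Site d)) (σ σ' : Config d) : ℝ :=
  ((edgesIn W).card : ℝ)⁻¹ *
    ∑ e ∈ edgesIn W, spin (σ e.1) * spin (σ (ep2 e)) * spin (σ' e.1) * spin (σ' (ep2 e))

/-- The limit edge overlap `R = lim_L R^{Λ_L}` (defined via `limUnder`; it equals the limit
whenever the limit exists). -/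
def overlap (d : ℕ) (σ σ' : Config d) : ℝ :=
  limUnder atTop fun L => overlapW (box d L) σ σ'

/-- The index set of pairs `1 ≤ i < j ≤ s` of replicas. -/
abbrev Pairs (s : ℕ) := {p : Fin s × Fin s // p.1 < p.2}

/-- The finite product of standard Gaussians. -/
def gaussPi (ι : Type) [Fintype ι] : Measure (ι → ℝ) := Measure.pi fun _ => gaussianReal 0 1

/-- Extend a family of couplings indexed by a finite edge set by `0`. -/
def extendE {d : ℕ} (E : Finset (Edge d)) (J : ↥E → ℝ) : Edge d → ℝ :=
  fun e => if h : e ∈ E then J ⟨e, h⟩ else 0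

/-- Translation `T_a` acting on configurations: `(T_a σ)_x = σ_{x+a}`. -/
def trC {d : ℕ} (a : Site d) (σ : Config d) : Config d := fun x => σ (x + a)

/-- Translation `T_a` acting on couplings: `(T_a J)_{{x,y}} = J_{{x+a,y+a}}`. -/
def trJ {d : ℕ} (a : Site d) (J : Edge d → ℝ) : Edge d → ℝ := fun e => J (e.1 + a, e.2)

/-- `∂W`: the edges of `Λ*` with exactly one endpoint in `W`. -/
def bdryEdges {d : ℕ} (Λ W : Finset (Site d)) : Finset (Edge d) :=
  (edgesIn Λ).filter fun e => Xor (e.1 ∈ W) (ep2 e ∈ W)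

namespace SG
open Real
variable {d : ℕ} (Λ W : Finset (Site d))

lemma spin_mul_self (b : Bool) : spin b * spin b = 1 := by cases b <;> simp [spin]

lemma abs_spin (b : Bool) : |spin b| = 1 := by cases b <;> simp [spin]

lemma mem_edgesIn {F : Finset (Site d)} {e : Edge d} :
    e ∈ edgesIn F ↔ e.1 ∈ F ∧ ep2 e ∈ F := by
  simp [edgesIn, Finset.mem_filter, Finset.mem_product]

lemma edgesIn_mono {F G : Finset (Site d)} (h : F ⊆ G) : edgesIn F ⊆ edgesIn G := fun e he =>
  mem_edgesIn.mpr ⟨h (mem_edgesIn.mp he).1, h (mem_edgesIn.mp he).2⟩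

lemma bdry_subset : bdryEdges Λ W ⊆ edgesIn Λ := Finset.filter_subset _ _

lemma edgesInW_disj_bdry {e : Edge d} (he : e ∈ edgesIn W) : e ∉ bdryEdges Λ W := by
  intro hb
  obtain ⟨h1, h2⟩ := mem_edgesIn.mp he
  rcases (Finset.mem_filter.mp hb).2 with ⟨_, h⟩ | ⟨_, h⟩ <;> exact h ‹_›

lemma edgesInL_disj_bdry {e : Edge d} (he : e ∈ edgesIn (Λ \ W)) : e ∉ bdryEdges Λ W := by
  intro hb
  obtain ⟨h1, h2⟩ := mem_edgesIn.mp he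
  rcases (Finset.mem_filter.mp hb).2 with ⟨h, _⟩ | ⟨h, _⟩
  · exact (Finset.mem_sdiff.mp h1).2 h
  · exact (Finset.mem_sdiff.mp h2).2 h

def glueFun (a : ↥W → Bool) (b : ↥(Λ \ W) → Bool) : ↥Λ → Bool := fun x =>
  if h : ↑x ∈ W then a ⟨↑x, h⟩ else b ⟨↑x, Finset.mem_sdiff.mpr ⟨x.2, h⟩⟩

def glueEquiv (hWΛ : W ⊆ Λ) : ((↥W → Bool) × (↥(Λ \ W) → Bool)) ≃ (↥Λ → Bool) where
  toFun p := glueFun Λ W p.1 p.2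
  invFun σ := (fun x => σ ⟨↑x, hWΛ x.2⟩, fun x => σ ⟨↑x, (Finset.mem_sdiff.mp x.2).1⟩)
  left_inv p := by
    ext x
    · simp [glueFun, x.2]
    · have hx : ↑x ∉ W := (Finset.mem_sdiff.mp x.2).2
      simp [glueFun, hx]
  right_inv σ := by
    funext x
    simp only [glueFun]
    split_ifs <;> rfl

lemma extendConfig_glue_mem_W (hWΛ : W ⊆ Λ) (a : ↥W → Bool) (b : ↥(Λ \ W) → Bool)
    {x : Site d} (hx : x ∈ W) :
    extendConfig Λ (glueFun Λ W a b) x = extendConfig W a x := by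
  simp [extendConfig, glueFun, hWΛ hx, hx]

lemma extendConfig_glue_mem_L (a : ↥W → Bool) (b : ↥(Λ \ W) → Bool)
    {x : Site d} (hx : x ∈ Λ \ W) :
    extendConfig Λ (glueFun Λ W a b) x = extendConfig (Λ \ W) b x := by
  obtain ⟨h1, h2⟩ := Finset.mem_sdiff.mp hx
  simp [extendConfig, glueFun, h1, h2, hx]

lemma energy_congr {E : Finset (Edge d)} (J : Edge d → ℝ) {σ σ' : Config d}
    (h : ∀ e ∈ E, σ e.1 = σ' e.1 ∧ σ (ep2 e) = σ' (ep2 e)) :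
    energy E J σ = energy E J σ' :=
  Finset.sum_congr rfl fun e he => by rw [(h e he).1, (h e he).2]

end SG

namespace SGaux
open Real
open scoped ENNReal NNReal


lemma gauss_density : gaussianReal 0 1 =
    volume.withDensity (fun x => ((gaussianPDFReal 0 1 x).toNNReal : ℝ≥0∞)) := by
  rw [gaussianReal_of_var_ne_zero 0 one_ne_zero]; rfl

lemma pdf_mul_exp (c x : ℝ) :
    gaussianPDFReal 0 1 x * rexp (c * x) = rexp (c ^ 2 / 2) * gaussianPDFReal c 1 x := by
  simp only [gaussianPDFReal, NNReal.coe_one, mul_one]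
  rw [mul_assoc, ← Real.exp_add, mul_comm (rexp (c ^ 2 / 2)), mul_assoc, ← Real.exp_add]
  congr 1
  ring

lemma integrable_exp_gauss (c : ℝ) :
    Integrable (fun x => rexp (c * x)) (gaussianReal 0 1) := by
  rw [gauss_density,
    integrable_withDensity_iff_integrable_smul ((measurable_gaussianPDFReal 0 1).real_toNNReal)]
  have hfun : ∀ x : ℝ, (gaussianPDFReal 0 1 x).toNNReal • rexp (c * x)
      = rexp (c ^ 2 / 2) * gaussianPDFReal c 1 x := fun x => by
    rw [NNReal.smul_def, smul_eq_mul, Real.coe_toNNReal _ (gaussianPDFReal_nonneg 0 1 x),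
      pdf_mul_exp]
  simp only [hfun]
  exact (integrable_gaussianPDFReal c 1).const_mul _

lemma integral_exp_gauss (c : ℝ) :
    ∫ x, rexp (c * x) ∂(gaussianReal 0 1) = rexp (c ^ 2 / 2) := by
  rw [gauss_density,
    integral_withDensity_eq_integral_smul ((measurable_gaussianPDFReal 0 1).real_toNNReal)]
  have hfun : ∀ x : ℝ, (gaussianPDFReal 0 1 x).toNNReal • rexp (c * x)
      = rexp (c ^ 2 / 2) * gaussianPDFReal c 1 x := fun x => by
    rw [NNReal.smul_def, smul_eq_mul, Real.coe_toNNReal _ (gaussianPDFReal_nonneg 0 1 x),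
      pdf_mul_exp]
  simp only [hfun]
  rw [integral_const_mul, integral_gaussianPDFReal_eq_one c one_ne_zero, mul_one]

lemma integrable_exp_abs_gauss (c : ℝ) :
    Integrable (fun x => rexp (c * |x|)) (gaussianReal 0 1) := by
  refine Integrable.mono' ((integrable_exp_gauss c).add (integrable_exp_gauss (-c)))
    (Continuous.aestronglyMeasurable (by continuity)) (ae_of_all _ fun x => ?_)
  rw [Real.norm_eq_abs, abs_of_nonneg (Real.exp_nonneg _)]
  simp only [Pi.add_apply]
  rcases abs_cases x with ⟨h, _⟩ | ⟨h, _⟩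
  · rw [h]
    linarith [Real.exp_nonneg (-c * x)]
  · rw [h]
    have h2 : c * -x = -c * x := by ring
    rw [h2]
    linarith [Real.exp_nonneg (c * x)]

lemma integrable_abs_gauss : Integrable (fun x => |x|) (gaussianReal 0 1) := by
  refine Integrable.mono' (integrable_exp_abs_gauss 1) continuous_abs.aestronglyMeasurable
    (ae_of_all _ fun x => ?_)
  rw [Real.norm_eq_abs, abs_abs, one_mul]
  linarith [Real.add_one_le_exp |x|, abs_nonneg x]

lemma gaussPi_integrable_prod {ι : Type} [Fintype ι] (f : ι → ℝ → ℝ)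
    (hf : ∀ i, Integrable (f i) (gaussianReal 0 1)) :
    Integrable (fun x : ι → ℝ => ∏ i, f i (x i)) (gaussPi ι) := by
  letI : MeasureSpace ℝ := ⟨gaussianReal 0 1⟩
  haveI : SigmaFinite (volume : Measure ℝ) :=
    inferInstanceAs (SigmaFinite (gaussianReal 0 1))
  have h := MeasureTheory.Integrable.fintype_prod (𝕜 := ℝ) (f := f) hf
  exact h

lemma gaussPi_integral_prod {ι : Type} [Fintype ι] (f : ι → ℝ → ℝ) :
    ∫ x, (∏ i, f i (x i)) ∂(gaussPi ι) = ∏ i, ∫ x, f i x ∂(gaussianReal 0 1) := by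
  letI : MeasureSpace ℝ := ⟨gaussianReal 0 1⟩
  haveI : SigmaFinite (volume : Measure ℝ) :=
    inferInstanceAs (SigmaFinite (gaussianReal 0 1))
  have h := MeasureTheory.integral_fintype_prod_eq_prod (𝕜 := ℝ) f (μ := fun _ : ι => gaussianReal 0 1)
  exact h

lemma gaussPi_integrable_single {ι : Type} [Fintype ι] [DecidableEq ι] (i : ι) (g : ℝ → ℝ)
    (hg : Integrable g (gaussianReal 0 1)) :
    Integrable (fun x : ι → ℝ => g (x i)) (gaussPi ι) := by
  have h := gaussPi_integrable_prod (fun j => if j = i then g else fun _ => 1) ?_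
  · convert h using 1
    funext x
    rw [Finset.prod_eq_single i (fun j _ hj => by simp [hj]) (by simp), if_pos rfl]
  · intro j
    by_cases hj : j = i <;> simp [hj, hg]

end SGaux

namespace SG2
open Real SG
variable {d : ℕ} (Λ W : Finset (Site d))

def eW (J : ↥(edgesIn Λ) → ℝ) (a : ↥W → Bool) : ℝ :=
  energy (edgesIn W) (extendE (edgesIn Λ) J) (extendConfig W a)

def eL (J : ↥(edgesIn Λ) → ℝ) (b : ↥(Λ \ W) → Bool) : ℝ :=
  energy (edgesIn (Λ \ W)) (extendE (edgesIn Λ) J) (extendConfig (Λ \ W) b)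

def sgn (a : ↥W → Bool) (b : ↥(Λ \ W) → Bool) (e : Edge d) : ℝ :=
  spin (extendConfig Λ (glueFun Λ W a b) e.1) * spin (extendConfig Λ (glueFun Λ W a b) (ep2 e))

def eB (J : ↥(edgesIn Λ) → ℝ) (a : ↥W → Bool) (b : ↥(Λ \ W) → Bool) : ℝ :=
  energy (bdryEdges Λ W) (extendE (edgesIn Λ) J) (extendConfig Λ (glueFun Λ W a b))

def ZW (βW : ℝ) (J : ↥(edgesIn Λ) → ℝ) : ℝ := ∑ a : ↥W → Bool, rexp (βW * eW Λ W J a)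

def ZL (β : ℝ) (J : ↥(edgesIn Λ) → ℝ) : ℝ := ∑ b : ↥(Λ \ W) → Bool, rexp (β * eL Λ W J b)

def NumZ (βW β : ℝ) (J : ↥(edgesIn Λ) → ℝ) : ℝ :=
  ∑ σ : ↥Λ → Bool, rexp
    (βW * energy (edgesIn W) (extendE (edgesIn Λ) J) (extendConfig Λ σ)
      + β * energy (edgesIn (Λ \ W)) (extendE (edgesIn Λ) J) (extendConfig Λ σ)
      + β * energy (bdryEdges Λ W) (extendE (edgesIn Λ) J) (extendConfig Λ σ))

abbrev CP := ((↥W → Bool) × (↥(Λ \ W) → Bool))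

def wt (βW β : ℝ) (J : ↥(edgesIn Λ) → ℝ) (p : CP Λ W) : ℝ :=
  rexp (βW * eW Λ W J p.1) * rexp (β * eL Λ W J p.2) / (ZW Λ W βW J * ZL Λ W β J)

def GG (βW β : ℝ) (J : ↥(edgesIn Λ) → ℝ) : ℝ :=
  ∑ p : CP Λ W, wt Λ W βW β J p * rexp (β * eB Λ W J p.1 p.2)

def MM (J : ↥(edgesIn Λ) → ℝ) : ℝ := ∑ i : ↥(edgesIn Λ), |J i|

def flipB (J : ↥(edgesIn Λ) → ℝ) : ↥(edgesIn Λ) → ℝ := fun i =>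
  if (i : Edge d) ∈ bdryEdges Λ W then -(J i) else J i

lemma extendE_coe (J : ↥(edgesIn Λ) → ℝ) (i : ↥(edgesIn Λ)) :
    extendE (edgesIn Λ) J ↑i = J i := by
  simp [extendE, i.2]

lemma ZW_pos (βW : ℝ) (J : ↥(edgesIn Λ) → ℝ) : 0 < ZW Λ W βW J :=
  Finset.sum_pos (fun a _ => Real.exp_pos _) Finset.univ_nonempty

lemma ZL_pos (β : ℝ) (J : ↥(edgesIn Λ) → ℝ) : 0 < ZL Λ W β J :=
  Finset.sum_pos (fun a _ => Real.exp_pos _) Finset.univ_nonempty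

lemma wt_pos (βW β : ℝ) (J : ↥(edgesIn Λ) → ℝ) (p : CP Λ W) : 0 < wt Λ W βW β J p :=
  div_pos (mul_pos (Real.exp_pos _) (Real.exp_pos _))
    (mul_pos (ZW_pos Λ W βW J) (ZL_pos Λ W β J))

lemma wt_sum (βW β : ℝ) (J : ↥(edgesIn Λ) → ℝ) : ∑ p : CP Λ W, wt Λ W βW β J p = 1 := by
  rw [Fintype.sum_prod_type]
  simp only [wt]
  simp only [← Finset.sum_div]
  rw [div_eq_one_iff_eq (mul_pos (ZW_pos Λ W βW J) (ZL_pos Λ W β J)).ne', ZW, ZL,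
    Finset.sum_mul_sum]

lemma GG_pos (βW β : ℝ) (J : ↥(edgesIn Λ) → ℝ) : 0 < GG Λ W βW β J :=
  Finset.sum_pos (fun p _ => mul_pos (wt_pos Λ W βW β J p) (Real.exp_pos _))
    Finset.univ_nonempty

lemma num_factor (hWΛ : W ⊆ Λ) (βW β : ℝ) (J : ↥(edgesIn Λ) → ℝ) :
    NumZ Λ W βW β J = ∑ p : CP Λ W,
      rexp (βW * eW Λ W J p.1) * rexp (β * eL Λ W J p.2) * rexp (β * eB Λ W J p.1 p.2) := by
  rw [NumZ, ← Equiv.sum_comp (glueEquiv Λ W hWΛ)]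
  refine Finset.sum_congr rfl fun p _ => ?_
  have h1 : energy (edgesIn W) (extendE (edgesIn Λ) J) (extendConfig Λ (glueFun Λ W p.1 p.2))
      = eW Λ W J p.1 :=
    energy_congr _ fun e he => ⟨extendConfig_glue_mem_W Λ W hWΛ _ _ (mem_edgesIn.mp he).1,
      extendConfig_glue_mem_W Λ W hWΛ _ _ (mem_edgesIn.mp he).2⟩
  have h2 : energy (edgesIn (Λ \ W)) (extendE (edgesIn Λ) J)
        (extendConfig Λ (glueFun Λ W p.1 p.2)) = eL Λ W J p.2 :=
    energy_congr _ fun e he => ⟨extendConfig_glue_mem_L Λ W _ _ (mem_edgesIn.mp he).1,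
      extendConfig_glue_mem_L Λ W _ _ (mem_edgesIn.mp he).2⟩
  show rexp (βW * energy (edgesIn W) (extendE (edgesIn Λ) J)
        (extendConfig Λ (glueFun Λ W p.1 p.2))
      + β * energy (edgesIn (Λ \ W)) (extendE (edgesIn Λ) J)
        (extendConfig Λ (glueFun Λ W p.1 p.2))
      + β * energy (bdryEdges Λ W) (extendE (edgesIn Λ) J)
        (extendConfig Λ (glueFun Λ W p.1 p.2))) = _
  rw [h1, h2, Real.exp_add, Real.exp_add]
  rfl

end SG2

namespace SG3
open Real SG SG2
variable {d : ℕ} (Λ W : Finset (Site d))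

lemma eB_eq (J : ↥(edgesIn Λ) → ℝ) (a : ↥W → Bool) (b : ↥(Λ \ W) → Bool) :
    eB Λ W J a b = ∑ e ∈ bdryEdges Λ W, extendE (edgesIn Λ) J e * sgn Λ W a b e :=
  Finset.sum_congr rfl fun e _ => (mul_assoc _ _ _)

lemma abs_sgn (a : ↥W → Bool) (b : ↥(Λ \ W) → Bool) (e : Edge d) : |sgn Λ W a b e| = 1 := by
  rw [sgn, abs_mul, abs_spin, abs_spin, mul_one]

lemma sq_sgn (a : ↥W → Bool) (b : ↥(Λ \ W) → Bool) (e : Edge d) : sgn Λ W a b e ^ 2 = 1 := by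
  rw [← sq_abs, abs_sgn, one_pow]

lemma energy_ext {F : Finset (Edge d)} (hF : ∀ e ∈ F, e ∉ bdryEdges Λ W)
    {J J' : ↥(edgesIn Λ) → ℝ} (h : ∀ i : ↥(edgesIn Λ), (i : Edge d) ∉ bdryEdges Λ W → J i = J' i)
    (σ : Config d) :
    energy F (extendE (edgesIn Λ) J) σ = energy F (extendE (edgesIn Λ) J') σ := by
  refine Finset.sum_congr rfl fun e he => ?_
  by_cases hE : e ∈ edgesIn Λ
  · rw [extendE, extendE, dif_pos hE, dif_pos hE, h ⟨e, hE⟩ (hF e he)]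
  · rw [extendE, extendE, dif_neg hE, dif_neg hE]

lemma flipB_off {i : ↥(edgesIn Λ)} (h : (i : Edge d) ∉ bdryEdges Λ W)
    (J : ↥(edgesIn Λ) → ℝ) : flipB Λ W J i = J i := if_neg h

lemma eW_flip (J : ↥(edgesIn Λ) → ℝ) (a : ↥W → Bool) :
    eW Λ W (flipB Λ W J) a = eW Λ W J a :=
  energy_ext Λ W (fun e he => edgesInW_disj_bdry Λ W he) (fun i hi => flipB_off Λ W hi J) _

lemma eL_flip (J : ↥(edgesIn Λ) → ℝ) (b : ↥(Λ \ W) → Bool) :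
    eL Λ W (flipB Λ W J) b = eL Λ W J b :=
  energy_ext Λ W (fun e he => edgesInL_disj_bdry Λ W he) (fun i hi => flipB_off Λ W hi J) _

lemma eB_flip (J : ↥(edgesIn Λ) → ℝ) (a : ↥W → Bool) (b : ↥(Λ \ W) → Bool) :
    eB Λ W (flipB Λ W J) a b = - eB Λ W J a b := by
  rw [eB_eq, eB_eq, ← Finset.sum_neg_distrib]
  refine Finset.sum_congr rfl fun e he => ?_
  have hE : e ∈ edgesIn Λ := bdry_subset Λ W he
  rw [extendE, extendE, dif_pos hE, dif_pos hE]
  show flipB Λ W J ⟨e, hE⟩ * _ = _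
  rw [flipB, if_pos he, neg_mul]

lemma ZW_flip (βW : ℝ) (J : ↥(edgesIn Λ) → ℝ) : ZW Λ W βW (flipB Λ W J) = ZW Λ W βW J := by
  unfold ZW; exact Finset.sum_congr rfl fun a _ => by rw [eW_flip]

lemma ZL_flip (β : ℝ) (J : ↥(edgesIn Λ) → ℝ) : ZL Λ W β (flipB Λ W J) = ZL Λ W β J := by
  unfold ZL; exact Finset.sum_congr rfl fun b _ => by rw [eL_flip]

lemma wt_flip (βW β : ℝ) (J : ↥(edgesIn Λ) → ℝ) (p : CP Λ W) :
    wt Λ W βW β (flipB Λ W J) p = wt Λ W βW β J p := by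
  rw [wt, wt, eW_flip, eL_flip, ZW_flip, ZL_flip]

lemma flipB_invol (J : ↥(edgesIn Λ) → ℝ) : flipB Λ W (flipB Λ W J) = J := by
  funext i
  rw [flipB, flipB]
  split_ifs with h <;> simp

lemma one_le_GG_mul_GG_flip (βW β : ℝ) (J : ↥(edgesIn Λ) → ℝ) :
    1 ≤ GG Λ W βW β J * GG Λ W βW β (flipB Λ W J) := by
  have hGf : GG Λ W βW β (flipB Λ W J)
      = ∑ p : CP Λ W, wt Λ W βW β J p * rexp (-(β * eB Λ W J p.1 p.2)) := by
    refine Finset.sum_congr rfl fun p _ => ?_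
    rw [wt_flip, eB_flip, mul_neg]
  rw [hGf, GG]
  have key := Finset.sum_sq_le_sum_mul_sum_of_sq_eq_mul (Finset.univ : Finset (CP Λ W))
    (f := fun p => wt Λ W βW β J p * rexp (β * eB Λ W J p.1 p.2))
    (g := fun p => wt Λ W βW β J p * rexp (-(β * eB Λ W J p.1 p.2)))
    (r := fun p => wt Λ W βW β J p)
    (fun p _ => le_of_lt (mul_pos (wt_pos Λ W βW β J p) (Real.exp_pos _)))
    (fun p _ => le_of_lt (mul_pos (wt_pos Λ W βW β J p) (Real.exp_pos _)))
    (fun p _ => by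
      rw [mul_mul_mul_comm, ← Real.exp_add, add_neg_cancel, Real.exp_zero, mul_one, sq])
  rwa [wt_sum, one_pow] at key

lemma log_GG_add_flip_nonneg (βW β : ℝ) (J : ↥(edgesIn Λ) → ℝ) :
    0 ≤ Real.log (GG Λ W βW β J) + Real.log (GG Λ W βW β (flipB Λ W J)) := by
  rw [← Real.log_mul (GG_pos Λ W βW β J).ne' (GG_pos Λ W βW β _).ne']
  exact Real.log_nonneg (one_le_GG_mul_GG_flip Λ W βW β J)

end SG3

namespace SG4
open Real SG SG2 SG3
variable {d : ℕ} (Λ W : Finset (Site d))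

lemma MM_nonneg (J : ↥(edgesIn Λ) → ℝ) : 0 ≤ MM Λ J :=
  Finset.sum_nonneg fun i _ => abs_nonneg _

lemma sum_abs_extendE (J : ↥(edgesIn Λ) → ℝ) :
    ∑ e ∈ edgesIn Λ, |extendE (edgesIn Λ) J e| = MM Λ J := by
  rw [MM, ← Finset.sum_coe_sort (edgesIn Λ) (fun e => |extendE (edgesIn Λ) J e|)]
  exact Finset.sum_congr rfl fun i _ => by rw [extendE_coe]

lemma abs_energy_le {F : Finset (Edge d)} (hF : F ⊆ edgesIn Λ) (J : ↥(edgesIn Λ) → ℝ)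
    (σ : Config d) : |energy F (extendE (edgesIn Λ) J) σ| ≤ MM Λ J := by
  calc |energy F (extendE (edgesIn Λ) J) σ|
      ≤ ∑ e ∈ F, |extendE (edgesIn Λ) J e * spin (σ e.1) * spin (σ (ep2 e))| :=
        Finset.abs_sum_le_sum_abs _ _
    _ = ∑ e ∈ F, |extendE (edgesIn Λ) J e| := by
        refine Finset.sum_congr rfl fun e _ => ?_
        rw [abs_mul, abs_mul, abs_spin, abs_spin, mul_one, mul_one]
    _ ≤ ∑ e ∈ edgesIn Λ, |extendE (edgesIn Λ) J e| :=
        Finset.sum_le_sum_of_subset_of_nonneg hF fun e _ _ => abs_nonneg _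
    _ = MM Λ J := sum_abs_extendE Λ J

lemma abs_eB_le (J : ↥(edgesIn Λ) → ℝ) (a : ↥W → Bool) (b : ↥(Λ \ W) → Bool) :
    |eB Λ W J a b| ≤ MM Λ J :=
  abs_energy_le Λ (bdry_subset Λ W) J _

lemma abs_log_sum_exp_le {ι : Type} [Fintype ι] [Nonempty ι] (f : ι → ℝ) (h : ℝ)
    (hf : ∀ i, |f i| ≤ h) :
    |Real.log (∑ i : ι, rexp (f i))| ≤ Real.log (Fintype.card ι) + h := by
  obtain ⟨i0⟩ := (inferInstance : Nonempty ι)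
  have h0 : 0 ≤ h := le_trans (abs_nonneg _) (hf i0)
  have hcard : (1 : ℝ) ≤ (Fintype.card ι : ℝ) := by
    exact_mod_cast Nat.one_le_iff_ne_zero.mpr Fintype.card_ne_zero
  have hlc : 0 ≤ Real.log (Fintype.card ι) := Real.log_nonneg hcard
  have hSpos : 0 < ∑ i : ι, rexp (f i) :=
    Finset.sum_pos (fun i _ => Real.exp_pos _) Finset.univ_nonempty
  rw [abs_le]
  constructor
  · have hlow : rexp (-(Real.log (Fintype.card ι) + h)) ≤ ∑ i : ι, rexp (f i) := by
      have h1 : rexp (-(Real.log (Fintype.card ι) + h)) ≤ rexp (f i0) := by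
        apply Real.exp_le_exp.mpr
        have := (abs_le.mp (hf i0)).1
        linarith
      exact h1.trans (Finset.single_le_sum (fun i _ => (Real.exp_pos (f i)).le)
        (Finset.mem_univ i0))
    have := Real.log_le_log (Real.exp_pos _) hlow
    rwa [Real.log_exp] at this
  · have hup : ∑ i : ι, rexp (f i) ≤ (Fintype.card ι : ℝ) * rexp h := by
      calc ∑ i : ι, rexp (f i) ≤ ∑ _i : ι, rexp h :=
            Finset.sum_le_sum fun i _ => Real.exp_le_exp.mpr (abs_le.mp (hf i)).2
        _ = (Fintype.card ι : ℝ) * rexp h := by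
            rw [Finset.sum_const, nsmul_eq_mul, Finset.card_univ]
    have := Real.log_le_log hSpos hup
    rwa [Real.log_mul (by positivity) (Real.exp_ne_zero _), Real.log_exp] at this

lemma GG_le (βW β : ℝ) (hβ : 0 ≤ β) (J : ↥(edgesIn Λ) → ℝ) :
    GG Λ W βW β J ≤ rexp (β * MM Λ J) := by
  calc GG Λ W βW β J ≤ ∑ p : CP Λ W, wt Λ W βW β J p * rexp (β * MM Λ J) := by
        refine Finset.sum_le_sum fun p _ => ?_
        refine mul_le_mul_of_nonneg_left (Real.exp_le_exp.mpr ?_) (wt_pos Λ W βW β J p).le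
        exact mul_le_mul_of_nonneg_left
          ((abs_le.mp (abs_eB_le Λ W J p.1 p.2)).2) hβ
    _ = rexp (β * MM Λ J) := by rw [← Finset.sum_mul, wt_sum, one_mul]

lemma GG_ge (βW β : ℝ) (hβ : 0 ≤ β) (J : ↥(edgesIn Λ) → ℝ) :
    rexp (-(β * MM Λ J)) ≤ GG Λ W βW β J := by
  calc rexp (-(β * MM Λ J)) = ∑ p : CP Λ W, wt Λ W βW β J p * rexp (-(β * MM Λ J)) := by
        rw [← Finset.sum_mul, wt_sum, one_mul]
    _ ≤ GG Λ W βW β J := by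
        refine Finset.sum_le_sum fun p _ => ?_
        refine mul_le_mul_of_nonneg_left (Real.exp_le_exp.mpr ?_) (wt_pos Λ W βW β J p).le
        have h1 := (abs_le.mp (abs_eB_le Λ W J p.1 p.2)).1
        have h2 := mul_le_mul_of_nonneg_left h1 hβ
        linarith

lemma abs_log_GG_le (βW β : ℝ) (hβ : 0 ≤ β) (J : ↥(edgesIn Λ) → ℝ) :
    |Real.log (GG Λ W βW β J)| ≤ β * MM Λ J := by
  rw [abs_le]
  constructor
  · have := Real.log_le_log (Real.exp_pos _) (GG_ge Λ W βW β hβ J)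
    rwa [Real.log_exp] at this
  · have := Real.log_le_log (GG_pos Λ W βW β J) (GG_le Λ W βW β hβ J)
    rwa [Real.log_exp] at this

lemma NumZ_eq (hWΛ : W ⊆ Λ) (βW β : ℝ) (J : ↥(edgesIn Λ) → ℝ) :
    NumZ Λ W βW β J = ZW Λ W βW J * ZL Λ W β J * GG Λ W βW β J := by
  rw [num_factor Λ W hWΛ, GG, Finset.mul_sum]
  refine Finset.sum_congr rfl fun p _ => ?_
  have h1 : ZW Λ W βW J ≠ 0 := (ZW_pos Λ W βW J).ne'
  have h2 : ZL Λ W β J ≠ 0 := (ZL_pos Λ W β J).ne'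
  rw [wt]
  field_simp

lemma logNum_eq (hWΛ : W ⊆ Λ) (βW β : ℝ) (J : ↥(edgesIn Λ) → ℝ) :
    Real.log (NumZ Λ W βW β J / ZL Λ W β J)
      = Real.log (ZW Λ W βW J) + Real.log (GG Λ W βW β J) := by
  have h2 : ZL Λ W β J ≠ 0 := (ZL_pos Λ W β J).ne'
  rw [NumZ_eq Λ W hWΛ]
  have h : ZW Λ W βW J * ZL Λ W β J * GG Λ W βW β J / ZL Λ W β J
      = ZW Λ W βW J * GG Λ W βW β J := by
    field_simp
  rw [h]
  exact Real.log_mul (ZW_pos Λ W βW J).ne' (GG_pos Λ W βW β J).ne'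

lemma continuous_energyE (F : Finset (Edge d)) (σ : Config d) :
    Continuous fun J : ↥(edgesIn Λ) → ℝ => energy F (extendE (edgesIn Λ) J) σ := by
  unfold energy
  refine continuous_finset_sum _ fun e _ => ?_
  by_cases hE : e ∈ edgesIn Λ
  · simp only [extendE, dif_pos hE]
    exact ((continuous_apply _).mul continuous_const).mul continuous_const
  · simp only [extendE, dif_neg hE]
    simp only [zero_mul]
    exact continuous_const

lemma continuous_ZW (βW : ℝ) : Continuous fun J => ZW Λ W βW J := by
  unfold ZW
  exact continuous_finset_sum _ fun a _ =>
    ((continuous_const.mul (continuous_energyE Λ _ _)).rexp)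

lemma continuous_ZL (β : ℝ) : Continuous fun J => ZL Λ W β J := by
  unfold ZL
  exact continuous_finset_sum _ fun b _ =>
    ((continuous_const.mul (continuous_energyE Λ _ _)).rexp)

lemma continuous_GG (βW β : ℝ) : Continuous fun J => GG Λ W βW β J := by
  unfold GG wt
  refine continuous_finset_sum _ fun p _ => Continuous.mul ?_ ?_
  · exact Continuous.div
      (((continuous_const.mul (continuous_energyE Λ _ _)).rexp).mul
        ((continuous_const.mul (continuous_energyE Λ _ _)).rexp))
      ((continuous_ZW Λ W βW).mul (continuous_ZL Λ W β))
      (fun J => (mul_pos (ZW_pos Λ W βW J) (ZL_pos Λ W β J)).ne')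
  · exact (continuous_const.mul (continuous_energyE Λ _ _)).rexp

lemma continuous_MM : Continuous fun J : ↥(edgesIn Λ) → ℝ => MM Λ J := by
  unfold MM
  exact continuous_finset_sum _ fun i _ => (continuous_apply i).abs

end SG4

namespace SG5
open Real SG SG2 SG3 SG4 SGaux
variable {d : ℕ} (Λ W : Finset (Site d))

instance gaussPi_prob (ι : Type) [Fintype ι] : IsProbabilityMeasure (gaussPi ι) := by
  unfold gaussPi; infer_instance

def pB (i : ↥(edgesIn Λ)) : Prop := (i : Edge d) ∈ bdryEdges Λ W

instance : DecidablePred (pB Λ W) := fun i => Finset.decidableMem _ _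

def φe : ((↥(edgesIn Λ)) → ℝ) ≃ᵐ ((Subtype (pB Λ W) → ℝ) × ({i // ¬ pB Λ W i} → ℝ)) :=
  MeasurableEquiv.piEquivPiSubtypeProd (fun _ => ℝ) (pB Λ W)

lemma φe_symm_apply (z : (Subtype (pB Λ W) → ℝ) × ({i // ¬ pB Λ W i} → ℝ)) (i : ↥(edgesIn Λ)) :
    (φe Λ W).symm z i = if h : pB Λ W i then z.1 ⟨i, h⟩ else z.2 ⟨i, h⟩ := rfl

def bdryEquiv : Subtype (pB Λ W) ≃ ↥(bdryEdges Λ W) where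
  toFun i := ⟨↑↑i, i.2⟩
  invFun e := ⟨⟨↑e, bdry_subset Λ W e.2⟩, e.2⟩
  left_inv i := Subtype.ext (Subtype.ext rfl)
  right_inv e := Subtype.ext rfl

lemma card_pB : Fintype.card (Subtype (pB Λ W)) = (bdryEdges Λ W).card := by
  rw [Fintype.card_congr (bdryEquiv Λ W), Fintype.card_coe]

lemma sum_pB (f : Edge d → ℝ) :
    ∑ i : Subtype (pB Λ W), f ↑↑i = ∑ e ∈ bdryEdges Λ W, f e := by
  rw [← Finset.sum_coe_sort (bdryEdges Λ W) f]
  exact Fintype.sum_equiv (bdryEquiv Λ W) _ _ (fun i => rfl)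

lemma ZW_ext (βW : ℝ) {J J' : ↥(edgesIn Λ) → ℝ}
    (h : ∀ i : ↥(edgesIn Λ), (i : Edge d) ∉ bdryEdges Λ W → J i = J' i) :
    ZW Λ W βW J = ZW Λ W βW J' :=
  Finset.sum_congr rfl fun a _ => by
    rw [eW, eW, energy_ext Λ W (fun e he => edgesInW_disj_bdry Λ W he) h]

lemma ZL_ext (β : ℝ) {J J' : ↥(edgesIn Λ) → ℝ}
    (h : ∀ i : ↥(edgesIn Λ), (i : Edge d) ∉ bdryEdges Λ W → J i = J' i) :
    ZL Λ W β J = ZL Λ W β J' :=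
  Finset.sum_congr rfl fun b _ => by
    rw [eL, eL, energy_ext Λ W (fun e he => edgesInL_disj_bdry Λ W he) h]

lemma wt_ext (βW β : ℝ) {J J' : ↥(edgesIn Λ) → ℝ}
    (h : ∀ i : ↥(edgesIn Λ), (i : Edge d) ∉ bdryEdges Λ W → J i = J' i) (q : CP Λ W) :
    wt Λ W βW β J q = wt Λ W βW β J' q := by
  rw [wt, wt, ZW_ext Λ W βW h, ZL_ext Λ W β h,
    eW, eW, energy_ext Λ W (fun e he => edgesInW_disj_bdry Λ W he) h,
    eL, eL, energy_ext Λ W (fun e he => edgesInL_disj_bdry Λ W he) h]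

lemma wt_le_one (βW β : ℝ) (J : ↥(edgesIn Λ) → ℝ) (q : CP Λ W) : wt Λ W βW β J q ≤ 1 := by
  rw [wt, div_le_one (mul_pos (ZW_pos Λ W βW J) (ZL_pos Λ W β J))]
  exact mul_le_mul
    (Finset.single_le_sum (f := fun a => rexp (βW * eW Λ W J a))
      (fun a _ => (Real.exp_pos _).le) (Finset.mem_univ q.1))
    (Finset.single_le_sum (f := fun b => rexp (β * eL Λ W J b))
      (fun b _ => (Real.exp_pos _).le) (Finset.mem_univ q.2))
    (Real.exp_pos _).le (ZW_pos Λ W βW J).le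

lemma eB_symm (z : (Subtype (pB Λ W) → ℝ) × ({i // ¬ pB Λ W i} → ℝ))
    (a : ↥W → Bool) (b : ↥(Λ \ W) → Bool) :
    eB Λ W ((φe Λ W).symm z) a b
      = ∑ i : Subtype (pB Λ W), z.1 i * sgn Λ W a b ↑↑i := by
  rw [eB_eq, ← sum_pB Λ W (fun e => extendE (edgesIn Λ) ((φe Λ W).symm z) e * sgn Λ W a b e)]
  refine Finset.sum_congr rfl fun i _ => ?_
  congr 1
  rw [extendE_coe, φe_symm_apply, dif_pos i.2]

lemma continuous_symm0 :
    Continuous fun r : {i // ¬ pB Λ W i} → ℝ => (φe Λ W).symm (0, r) := by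
  refine continuous_pi fun i => ?_
  by_cases h : pB Λ W i
  · simp only [φe_symm_apply, dif_pos h]
    exact continuous_const
  · simp only [φe_symm_apply, dif_neg h]
    exact continuous_apply _

lemma continuous_wt (βW β : ℝ) (q : CP Λ W) : Continuous fun J => wt Λ W βW β J q := by
  unfold wt
  exact Continuous.div
    (((continuous_const.mul (continuous_energyE Λ _ _)).rexp).mul
      ((continuous_const.mul (continuous_energyE Λ _ _)).rexp))
    ((continuous_ZW Λ W βW).mul (continuous_ZL Λ W β))
    (fun J => (mul_pos (ZW_pos Λ W βW J) (ZL_pos Λ W β J)).ne')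

set_option maxHeartbeats 1000000 in
lemma integral_GG (hWΛ : W ⊆ Λ) (βW β : ℝ) :
    ∫ J, GG Λ W βW β J ∂(gaussPi (↥(edgesIn Λ)))
      = rexp (β ^ 2 / 2 * (bdryEdges Λ W).card) := by
  classical
  have hmp0 := measurePreserving_piEquivPiSubtypeProd
    (fun _ : ↥(edgesIn Λ) => gaussianReal 0 1) (pB Λ W)
  have hmp := hmp0.symm
  have hint : ∫ J, GG Λ W βW β J ∂(gaussPi (↥(edgesIn Λ)))
      = ∫ z, GG Λ W βW β ((φe Λ W).symm z)
          ∂((Measure.pi fun _ : Subtype (pB Λ W) => gaussianReal 0 1).prod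
            (Measure.pi fun _ : {i // ¬ pB Λ W i} => gaussianReal 0 1)) :=
    (hmp.integral_comp' _).symm
  rw [hint]
  have hGGz : ∀ z, GG Λ W βW β ((φe Λ W).symm z)
      = ∑ q : CP Λ W,
          (∏ i : Subtype (pB Λ W), rexp ((β * sgn Λ W q.1 q.2 ↑↑i) * z.1 i))
            * wt Λ W βW β ((φe Λ W).symm (0, z.2)) q := by
    intro z
    rw [GG]
    refine Finset.sum_congr rfl fun q _ => ?_
    have hagree : ∀ i : ↥(edgesIn Λ), (i : Edge d) ∉ bdryEdges Λ W →
        (φe Λ W).symm z i = (φe Λ W).symm (0, z.2) i := fun i hi => by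
      have hi' : ¬ pB Λ W i := hi
      rw [φe_symm_apply, φe_symm_apply, dif_neg hi', dif_neg hi']
    rw [wt_ext Λ W βW β hagree q, eB_symm, Finset.mul_sum, Real.exp_sum, mul_comm]
    congr 1
    exact Finset.prod_congr rfl fun i _ => by rw [mul_comm (z.1 i) _, ← mul_assoc]
  rw [integral_congr_ae (ae_of_all _ hGGz)]
  have hH : ∀ q : CP Λ W, Integrable
      (fun b : Subtype (pB Λ W) → ℝ => ∏ i, rexp ((β * sgn Λ W q.1 q.2 ↑↑i) * b i))
      (Measure.pi fun _ : Subtype (pB Λ W) => gaussianReal 0 1) := fun q =>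
    gaussPi_integrable_prod _ (fun i => integrable_exp_gauss _)
  have hFmeas : ∀ q : CP Λ W, AEStronglyMeasurable
      (fun r : {i // ¬ pB Λ W i} → ℝ => wt Λ W βW β ((φe Λ W).symm (0, r)) q)
      (Measure.pi fun _ : {i // ¬ pB Λ W i} => gaussianReal 0 1) := fun q =>
    ((continuous_wt Λ W βW β q).comp (continuous_symm0 Λ W)).aestronglyMeasurable
  have hF : ∀ q : CP Λ W, Integrable
      (fun r : {i // ¬ pB Λ W i} → ℝ => wt Λ W βW β ((φe Λ W).symm (0, r)) q)
      (Measure.pi fun _ : {i // ¬ pB Λ W i} => gaussianReal 0 1) := fun q => by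
    refine Integrable.mono' (integrable_const 1) (hFmeas q) (ae_of_all _ fun r => ?_)
    rw [Real.norm_eq_abs, abs_of_pos (wt_pos Λ W βW β _ q)]
    exact wt_le_one Λ W βW β _ q
  rw [integral_finset_sum _ (fun q _ => Integrable.mul_prod (hH q) (hF q))]
  have hterm : ∀ q : CP Λ W,
      (∫ z, (∏ i : Subtype (pB Λ W), rexp ((β * sgn Λ W q.1 q.2 ↑↑i) * z.1 i))
          * wt Λ W βW β ((φe Λ W).symm (0, z.2)) q
        ∂((Measure.pi fun _ : Subtype (pB Λ W) => gaussianReal 0 1).prod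
            (Measure.pi fun _ : {i // ¬ pB Λ W i} => gaussianReal 0 1)))
      = rexp (β ^ 2 / 2 * (bdryEdges Λ W).card)
          * ∫ r, wt Λ W βW β ((φe Λ W).symm (0, r)) q
              ∂(Measure.pi fun _ : {i // ¬ pB Λ W i} => gaussianReal 0 1) := by
    intro q
    have heq : (∫ z, (∏ i : Subtype (pB Λ W), rexp ((β * sgn Λ W q.1 q.2 ↑↑i) * z.1 i))
          * wt Λ W βW β ((φe Λ W).symm (0, z.2)) q
        ∂((Measure.pi fun _ : Subtype (pB Λ W) => gaussianReal 0 1).prod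
            (Measure.pi fun _ : {i // ¬ pB Λ W i} => gaussianReal 0 1)))
        = (∫ b, ∏ i : Subtype (pB Λ W), rexp ((β * sgn Λ W q.1 q.2 ↑↑i) * b i)
            ∂(Measure.pi fun _ : Subtype (pB Λ W) => gaussianReal 0 1))
          * ∫ r, wt Λ W βW β ((φe Λ W).symm (0, r)) q
            ∂(Measure.pi fun _ : {i // ¬ pB Λ W i} => gaussianReal 0 1) :=
      integral_prod_mul
        (fun b : Subtype (pB Λ W) → ℝ => ∏ i, rexp ((β * sgn Λ W q.1 q.2 ↑↑i) * b i))
        (fun r : {i // ¬ pB Λ W i} → ℝ => wt Λ W βW β ((φe Λ W).symm (0, r)) q)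
    rw [heq]
    congr 1
    have := gaussPi_integral_prod (ι := Subtype (pB Λ W))
      (fun i x => rexp ((β * sgn Λ W q.1 q.2 ↑↑i) * x))
    rw [show (Measure.pi fun _ : Subtype (pB Λ W) => gaussianReal 0 1)
        = gaussPi (Subtype (pB Λ W)) from rfl, this]
    have : ∀ i : Subtype (pB Λ W),
        ∫ x, rexp ((β * sgn Λ W q.1 q.2 ↑↑i) * x) ∂(gaussianReal 0 1)
          = rexp (β ^ 2 / 2) := fun i => by
      rw [integral_exp_gauss, mul_pow, sq_sgn, mul_one]
    rw [Finset.prod_congr rfl fun i _ => this i, Finset.prod_const, Finset.card_univ,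
      card_pB, ← Real.exp_nat_mul, mul_comm ((bdryEdges Λ W).card : ℝ)]
  rw [Finset.sum_congr rfl fun q _ => hterm q, ← Finset.mul_sum,
    ← integral_finset_sum _ (fun q _ => hF q)]
  have h1 : ∀ r : {i // ¬ pB Λ W i} → ℝ,
      ∑ q : CP Λ W, wt Λ W βW β ((φe Λ W).symm (0, r)) q = 1 := fun r => wt_sum Λ W βW β _
  rw [integral_congr_ae (ae_of_all _ h1)]
  simp
end SG5

namespace SG6
open Real SG SG2 SG3 SG4 SG5 SGaux
open scoped NNReal
variable {d : ℕ} (Λ W : Finset (Site d))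

lemma integrable_MM : Integrable (fun J => MM Λ J) (gaussPi (↥(edgesIn Λ))) := by
  unfold MM
  exact integrable_finset_sum _ fun i _ =>
    gaussPi_integrable_single i _ integrable_abs_gauss

lemma integrable_exp_MM (c : ℝ) :
    Integrable (fun J => rexp (c * MM Λ J)) (gaussPi (↥(edgesIn Λ))) := by
  have h : (fun J : ↥(edgesIn Λ) → ℝ => rexp (c * MM Λ J))
      = fun J => ∏ i : ↥(edgesIn Λ), rexp (c * |J i|) := by
    funext J
    rw [MM, Finset.mul_sum, Real.exp_sum]
  rw [h]
  exact gaussPi_integrable_prod _ fun i => integrable_exp_abs_gauss c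

lemma integrable_logZW (hWΛ : W ⊆ Λ) (βW : ℝ) :
    Integrable (fun J => Real.log (ZW Λ W βW J)) (gaussPi (↥(edgesIn Λ))) := by
  refine Integrable.mono'
    ((integrable_const (Real.log (Fintype.card (↥W → Bool)))).add
      ((integrable_MM Λ).const_mul |βW|))
    (Continuous.aestronglyMeasurable
      ((continuous_ZW Λ W βW).log fun J => (ZW_pos Λ W βW J).ne'))
    (ae_of_all _ fun J => ?_)
  rw [Real.norm_eq_abs]
  show |Real.log (ZW Λ W βW J)|
      ≤ Real.log (Fintype.card (↥W → Bool)) + |βW| * MM Λ J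
  refine abs_log_sum_exp_le (fun a => βW * eW Λ W J a) (|βW| * MM Λ J) fun a => ?_
  rw [abs_mul]
  exact mul_le_mul_of_nonneg_left
    (abs_energy_le Λ (edgesIn_mono hWΛ) J _) (abs_nonneg βW)

lemma integrable_logGG (βW β : ℝ) (hβ : 0 ≤ β) :
    Integrable (fun J => Real.log (GG Λ W βW β J)) (gaussPi (↥(edgesIn Λ))) := by
  refine Integrable.mono' ((integrable_MM Λ).const_mul β)
    (Continuous.aestronglyMeasurable
      ((continuous_GG Λ W βW β).log fun J => (GG_pos Λ W βW β J).ne'))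
    (ae_of_all _ fun J => ?_)
  rw [Real.norm_eq_abs]
  exact abs_log_GG_le Λ W βW β hβ J

lemma integrable_GG (βW β : ℝ) (hβ : 0 ≤ β) :
    Integrable (fun J => GG Λ W βW β J) (gaussPi (↥(edgesIn Λ))) := by
  refine Integrable.mono' (integrable_exp_MM Λ β)
    (continuous_GG Λ W βW β).aestronglyMeasurable (ae_of_all _ fun J => ?_)
  rw [Real.norm_eq_abs, abs_of_pos (GG_pos Λ W βW β J)]
  exact GG_le Λ W βW β hβ J

lemma map_neg_gauss :
    Measure.map (fun x : ℝ => -x) (gaussianReal 0 1) = gaussianReal 0 1 := by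
  have h := gaussianReal_map_const_mul (μ := 0) (v := 1) (-1 : ℝ)
  have h2 : NNReal.mk ((-1 : ℝ) ^ 2) (sq_nonneg _) = 1 := by
    ext; norm_num
  rw [h2, one_mul, mul_zero] at h
  have h1 : (fun x : ℝ => -x) = ((-1 : ℝ) * ·) := by
    funext x; exact (neg_one_mul x).symm
  rw [h1]
  exact h

lemma flip_mp : MeasurePreserving (flipB Λ W) (gaussPi (↥(edgesIn Λ)))
    (gaussPi (↥(edgesIn Λ))) := by
  have h := measurePreserving_pi (fun _ : ↥(edgesIn Λ) => gaussianReal 0 1)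
    (fun _ : ↥(edgesIn Λ) => gaussianReal 0 1)
    (f := fun i (x : ℝ) => if (i : Edge d) ∈ bdryEdges Λ W then -x else x) ?_
  · exact h
  · intro i
    by_cases hi : (i : Edge d) ∈ bdryEdges Λ W
    · simp only [if_pos hi]
      exact ⟨measurable_neg, map_neg_gauss⟩
    · simp only [if_neg hi]
      exact MeasurePreserving.id _

lemma MM_flip (J : ↥(edgesIn Λ) → ℝ) : MM Λ (flipB Λ W J) = MM Λ J := by
  unfold MM
  refine Finset.sum_congr rfl fun i _ => ?_
  rw [flipB]
  split_ifs <;> simp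

lemma integral_logGG_nonneg (βW β : ℝ) (hβ : 0 ≤ β) :
    0 ≤ ∫ J, Real.log (GG Λ W βW β J) ∂(gaussPi (↥(edgesIn Λ))) := by
  have hmp := flip_mp Λ W
  have hmeas : AEStronglyMeasurable (fun J => Real.log (GG Λ W βW β J))
      (gaussPi (↥(edgesIn Λ))) :=
    (Continuous.aestronglyMeasurable
      ((continuous_GG Λ W βW β).log fun J => (GG_pos Λ W βW β J).ne'))
  have hint := integrable_logGG Λ W βW β hβ
  have hint2 : Integrable (fun J => Real.log (GG Λ W βW β (flipB Λ W J)))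
      (gaussPi (↥(edgesIn Λ))) := by
    refine Integrable.mono' ((integrable_MM Λ).const_mul β)
      (Continuous.aestronglyMeasurable ?_) (ae_of_all _ fun J => ?_)
    · refine Continuous.log ((continuous_GG Λ W βW β).comp ?_)
        (fun J => (GG_pos Λ W βW β _).ne')
      refine continuous_pi fun i => ?_
      unfold flipB
      by_cases hi : (i : Edge d) ∈ bdryEdges Λ W
      · simp only [if_pos hi]
        exact (continuous_apply i).neg
      · simp only [if_neg hi]
        exact continuous_apply i
    · rw [Real.norm_eq_abs]
      have := abs_log_GG_le Λ W βW β hβ (flipB Λ W J)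
      rwa [MM_flip Λ W J] at this
  have heq : ∫ J, Real.log (GG Λ W βW β J) ∂(gaussPi (↥(edgesIn Λ)))
      = ∫ J, Real.log (GG Λ W βW β (flipB Λ W J)) ∂(gaussPi (↥(edgesIn Λ))) := by
    conv_lhs => rw [← hmp.map_eq]
    rw [integral_map hmp.measurable.aemeasurable]
    rw [hmp.map_eq]
    exact hmeas
  have hnn : 0 ≤ ∫ J, (Real.log (GG Λ W βW β J)
      + Real.log (GG Λ W βW β (flipB Λ W J))) ∂(gaussPi (↥(edgesIn Λ))) :=
    integral_nonneg fun J => log_GG_add_flip_nonneg Λ W βW β J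
  rw [integral_add hint hint2] at hnn
  linarith [heq]

lemma integral_logGG_le (hWΛ : W ⊆ Λ) (βW β : ℝ) (hβ : 0 ≤ β) :
    ∫ J, Real.log (GG Λ W βW β J) ∂(gaussPi (↥(edgesIn Λ)))
      ≤ β ^ 2 / 2 * (bdryEdges Λ W).card := by
  set K : ℝ := rexp (β ^ 2 / 2 * (bdryEdges Λ W).card) with hKdef
  have hK : 0 < K := Real.exp_pos _
  have hpt : ∀ J, Real.log (GG Λ W βW β J) ≤ Real.log K + (GG Λ W βW β J / K - 1) := by
    intro J
    have h := Real.log_le_sub_one_of_pos (div_pos (GG_pos Λ W βW β J) hK)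
    rw [Real.log_div (GG_pos Λ W βW β J).ne' hK.ne'] at h
    linarith
  have hrhs : Integrable (fun J => Real.log K + (GG Λ W βW β J / K - 1))
      (gaussPi (↥(edgesIn Λ))) :=
    (integrable_const _).add (((integrable_GG Λ W βW β hβ).div_const K).sub
      (integrable_const 1))
  have hle := integral_mono (integrable_logGG Λ W βW β hβ) hrhs hpt
  have hdiv : Integrable (fun J => GG Λ W βW β J / K) (gaussPi (↥(edgesIn Λ))) :=
    (integrable_GG Λ W βW β hβ).div_const K
  have hsub : Integrable (fun J => GG Λ W βW β J / K - 1) (gaussPi (↥(edgesIn Λ))) :=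
    hdiv.sub (integrable_const 1)
  have hcomp : ∫ J, (Real.log K + (GG Λ W βW β J / K - 1)) ∂(gaussPi (↥(edgesIn Λ)))
      = Real.log K
        + ((∫ J, GG Λ W βW β J ∂(gaussPi (↥(edgesIn Λ)))) / K - 1) := by
    rw [integral_add (integrable_const _) hsub, integral_sub hdiv (integrable_const 1),
      integral_div, integral_const, integral_const]
    simp
  rw [hcomp, integral_GG Λ W hWΛ βW β, ← hKdef, div_self hK.ne'] at hle
  calc ∫ J, Real.log (GG Λ W βW β J) ∂(gaussPi (↥(edgesIn Λ)))
      ≤ Real.log K + (1 - 1) := hle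
    _ = β ^ 2 / 2 * (bdryEdges Λ W).card := by
        rw [hKdef, Real.log_exp]; ring

end SG6

/-- the free energy of the window is insensitive to the environment.
With `f_{Λ,W}(β_W)` the `W`-normalized free energy of the window in the environment `Λ`
and `f_W(β_W)` the free energy of the isolated window,
`0 ≤ f_{Λ,W}(β_W) − f_W(β_W) ≤ (β²/2)·|∂W|/|W|`. -/
theorem window_free_energy_comparison (d : ℕ) (Λ W : Finset (Site d)) (hWΛ : W ⊆ Λ)
    (βW β : ℝ) (hβW : 0 ≤ βW) (hβ : 0 ≤ β) :
    0 ≤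
      (((W.card : ℝ))⁻¹ * ∫ J, Real.log
          ((∑ σ : ↥Λ → Bool, Real.exp
              (βW * energy (edgesIn W) (extendE (edgesIn Λ) J) (extendConfig Λ σ)
                + β * energy (edgesIn (Λ \ W)) (extendE (edgesIn Λ) J) (extendConfig Λ σ)
                + β * energy (bdryEdges Λ W) (extendE (edgesIn Λ) J) (extendConfig Λ σ)))
            / ∑ τ : ↥(Λ \ W) → Bool, Real.exp
              (β * energy (edgesIn (Λ \ W)) (extendE (edgesIn Λ) J)
                (extendConfig (Λ \ W) τ)))
          ∂(gaussPi ↥(edgesIn Λ)))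
      - ((W.card : ℝ))⁻¹ * ∫ J, Real.log
          (∑ σ : ↥W → Bool, Real.exp
            (βW * energy (edgesIn W) (extendE (edgesIn Λ) J) (extendConfig W σ)))
          ∂(gaussPi ↥(edgesIn Λ)) ∧
    (((W.card : ℝ))⁻¹ * ∫ J, Real.log
          ((∑ σ : ↥Λ → Bool, Real.exp
              (βW * energy (edgesIn W) (extendE (edgesIn Λ) J) (extendConfig Λ σ)
                + β * energy (edgesIn (Λ \ W)) (extendE (edgesIn Λ) J) (extendConfig Λ σ)
                + β * energy (bdryEdges Λ W) (extendE (edgesIn Λ) J) (extendConfig Λ σ)))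
            / ∑ τ : ↥(Λ \ W) → Bool, Real.exp
              (β * energy (edgesIn (Λ \ W)) (extendE (edgesIn Λ) J)
                (extendConfig (Λ \ W) τ)))
          ∂(gaussPi ↥(edgesIn Λ)))
      - ((W.card : ℝ))⁻¹ * ∫ J, Real.log
          (∑ σ : ↥W → Bool, Real.exp
            (βW * energy (edgesIn W) (extendE (edgesIn Λ) J) (extendConfig W σ)))
          ∂(gaussPi ↥(edgesIn Λ))
      ≤ β ^ 2 / 2 * ((bdryEdges Λ W).card / (W.card : ℝ)) := by
  classical
  have hfun : (fun J : ↥(edgesIn Λ) → ℝ => Real.log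
          ((∑ σ : ↥Λ → Bool, Real.exp
              (βW * energy (edgesIn W) (extendE (edgesIn Λ) J) (extendConfig Λ σ)
                + β * energy (edgesIn (Λ \ W)) (extendE (edgesIn Λ) J) (extendConfig Λ σ)
                + β * energy (bdryEdges Λ W) (extendE (edgesIn Λ) J) (extendConfig Λ σ)))
            / ∑ τ : ↥(Λ \ W) → Bool, Real.exp
              (β * energy (edgesIn (Λ \ W)) (extendE (edgesIn Λ) J)
                (extendConfig (Λ \ W) τ))))
      = fun J => Real.log (SG2.ZW Λ W βW J) + Real.log (SG2.GG Λ W βW β J) :=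
    funext fun J => SG4.logNum_eq Λ W hWΛ βW β J
  have hfun2 : (fun J : ↥(edgesIn Λ) → ℝ => Real.log
          (∑ σ : ↥W → Bool, Real.exp
            (βW * energy (edgesIn W) (extendE (edgesIn Λ) J) (extendConfig W σ))))
      = fun J => Real.log (SG2.ZW Λ W βW J) := rfl
  rw [hfun, hfun2,
    integral_add (SG6.integrable_logZW Λ W hWΛ βW) (SG6.integrable_logGG Λ W βW β hβ)]
  have hcinv : (0 : ℝ) ≤ ((W.card : ℝ))⁻¹ := by positivity
  have hBnn := SG6.integral_logGG_nonneg Λ W βW β hβ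
  have hBle := SG6.integral_logGG_le Λ W hWΛ βW β hβ
  set A := ∫ J, Real.log (SG2.ZW Λ W βW J) ∂(gaussPi ↥(edgesIn Λ))
  set B := ∫ J, Real.log (SG2.GG Λ W βW β J) ∂(gaussPi ↥(edgesIn Λ))
  have hkey : ((W.card : ℝ))⁻¹ * (A + B) - ((W.card : ℝ))⁻¹ * A
      = ((W.card : ℝ))⁻¹ * B := by ring
  rw [hkey]
  constructor
  · exact mul_nonneg hcinv hBnn
  · have hrhs : β ^ 2 / 2 * ((bdryEdges Λ W).card / (W.card : ℝ))
        = ((W.card : ℝ))⁻¹ * (β ^ 2 / 2 * (bdryEdges Λ W).card) := by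
      rw [div_eq_mul_inv]; ring
    rw [hrhs]
    exact mul_le_mul_of_nonneg_left hBle hcinv
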